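/- Let f : [0,1]^d → ℝ be a non-negative, continuously differentiable, M₁-Lipschitz, continuous DR-submodular function, and let F be the surrogate potential. Then for every x ∈ [0,1]^d: (1 − e^{−1}) · ⟨∇F(x), −x⟩ ≥ −f(h(x)) + ∫₀¹ e^{z−1} f(h_z(x)) dz, where h(x) = 1 − e^{−x} and h_z(x) = 1 − e^{−z x} coordinate-wise. -/

import Mathlib

open scoped RealInnerProductSpace

noncomputable section

/-- Membership in the unit box `[0,1]^d`. -/
def inBox {d : ℕ} (x : EuclideanSpace ℝ (Fin d)) : Prop :=
  ∀ i, x i ∈ Set.Icc (0 : ℝ) 1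

/-- Continuous DR-submodularity: the gradient is coordinate-wise antitone on `[0,1]^d`. -/
def DRSubmodular {d : ℕ} (f : EuclideanSpace ℝ (Fin d) → ℝ) : Prop :=
  ∀ x y : EuclideanSpace ℝ (Fin d), inBox x → inBox y → (∀ i, x i ≤ y i) →
    ∀ i, gradient f y i ≤ gradient f x i

/-- The exponential reparametrization `h_z(x) = 1 - e^{-z x}` (coordinate-wise). -/
def hmap {d : ℕ} (z : ℝ) (x : EuclideanSpace ℝ (Fin d)) : EuclideanSpace ℝ (Fin d) :=
  WithLp.toLp 2 (fun i => 1 - Real.exp (-(z * x i)))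

/-- Coordinate-wise probabilistic sum `x ⊕ y = 1 - (1-x) ⊙ (1-y)`. -/
def psum {d : ℕ} (x y : EuclideanSpace ℝ (Fin d)) : EuclideanSpace ℝ (Fin d) :=
  WithLp.toLp 2 (fun i => 1 - (1 - x i) * (1 - y i))

/-- Coordinate-wise (Hadamard) product. -/
def had {d : ℕ} (u v : EuclideanSpace ℝ (Fin d)) : EuclideanSpace ℝ (Fin d) :=
  WithLp.toLp 2 (fun i => u i * v i)

/-- Coordinate-wise exponential `e^{-z x}`. -/
def expv {d : ℕ} (z : ℝ) (x : EuclideanSpace ℝ (Fin d)) : EuclideanSpace ℝ (Fin d) :=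
  WithLp.toLp 2 (fun i => Real.exp (-(z * x i)))

/-- The surrogate potential
`F(x) = ∫₀¹ (e^{z-1} / ((1-e⁻¹) z)) (f(1 - e^{-z x}) - f(0)) dz`. -/
def surrogate {d : ℕ} (f : EuclideanSpace ℝ (Fin d) → ℝ)
    (x : EuclideanSpace ℝ (Fin d)) : ℝ :=
  ∫ z in (0:ℝ)..1, (Real.exp (z - 1) / ((1 - Real.exp (-1)) * z)) * (f (hmap z x) - f 0)

/-- A set `K ⊆ [0,1]^d` is down-closed if `y ∈ K` and `0 ≤ x ≤ y` imply `x ∈ K`. -/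
def DownClosed {d : ℕ} (K : Set (EuclideanSpace ℝ (Fin d))) : Prop :=
  ∀ y ∈ K, ∀ x : EuclideanSpace ℝ (Fin d), (∀ i, 0 ≤ x i) → (∀ i, x i ≤ y i) → x ∈ K


/-! ### Auxiliary material -/

/-- A function `Fin d → ℝ` regarded as a point of `EuclideanSpace`. -/
def vec {d : ℕ} (g : Fin d → ℝ) : EuclideanSpace ℝ (Fin d) := WithLp.toLp 2 g

lemma vec_apply {d : ℕ} (g : Fin d → ℝ) (i : Fin d) : vec g i = g i := rfl

/-- Coordinatewise multiplication as a continuous linear map on `EuclideanSpace`. -/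
def Dmap {d : ℕ} (c : Fin d → ℝ) :
    EuclideanSpace ℝ (Fin d) →L[ℝ] EuclideanSpace ℝ (Fin d) :=
  ((PiLp.continuousLinearEquiv 2 ℝ (fun _ : Fin d => ℝ)).symm.toContinuousLinearMap).comp
    (ContinuousLinearMap.pi fun i => c i • (EuclideanSpace.proj i))

lemma Dmap_apply {d : ℕ} (c : Fin d → ℝ) (v : EuclideanSpace ℝ (Fin d)) (i : Fin d) :
    Dmap c v i = c i * v i := rfl

def DmapL {d : ℕ} : (Fin d → ℝ) →ₗ[ℝ] (EuclideanSpace ℝ (Fin d) →L[ℝ] EuclideanSpace ℝ (Fin d)) where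
  toFun := Dmap
  map_add' c c' := by
    refine ContinuousLinearMap.ext fun v => PiLp.ext fun j => ?_
    show (c + c') j * v j = _
    simp [Dmap_apply, PiLp.add_apply]; ring
  map_smul' a c := by
    refine ContinuousLinearMap.ext fun v => PiLp.ext fun j => ?_
    show (a • c) j * v j = _
    simp [Dmap_apply, PiLp.smul_apply]; ring

lemma continuous_Dmap {d : ℕ} : Continuous (Dmap (d := d)) :=
  (DmapL (d := d)).continuous_of_finiteDimensional

lemma Dmap_norm_apply_le {d : ℕ} (c : Fin d → ℝ) (v : EuclideanSpace ℝ (Fin d)) (C : ℝ)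
    (hC : 0 ≤ C) (h : ∀ i, |c i| ≤ C) : ‖Dmap c v‖ ≤ C * ‖v‖ := by
  rw [EuclideanSpace.norm_eq, EuclideanSpace.norm_eq]
  rw [← Real.sqrt_sq hC, ← Real.sqrt_mul (by positivity)]
  apply Real.sqrt_le_sqrt
  rw [Finset.mul_sum]
  apply Finset.sum_le_sum
  intro i _
  have h1 := h i
  have h2 : (c i * v i)^2 ≤ C^2 * (v i)^2 := by
    rw [mul_pow]
    have : (c i)^2 ≤ C^2 := sq_le_sq' (by linarith [abs_le.1 h1]) (abs_le.1 h1).2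
    nlinarith [sq_nonneg (v i)]
  calc ‖Dmap c v i‖^2 = (c i * v i)^2 := by rw [Dmap_apply, Real.norm_eq_abs, sq_abs]
    _ ≤ C^2 * (v i)^2 := h2
    _ = C^2 * ‖v i‖^2 := by rw [Real.norm_eq_abs, sq_abs]

lemma Dmap_opNorm_le {d : ℕ} (c : Fin d → ℝ) (C : ℝ) (hC : 0 ≤ C) (h : ∀ i, |c i| ≤ C) :
    ‖Dmap c‖ ≤ C :=
  ContinuousLinearMap.opNorm_le_bound _ hC (fun v => Dmap_norm_apply_le c v C hC h)

lemma norm_le_sqrt_card {d : ℕ} (v : EuclideanSpace ℝ (Fin d)) (C : ℝ) (hC : 0 ≤ C)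
    (h : ∀ i, |v i| ≤ C) : ‖v‖ ≤ Real.sqrt d * C := by
  rw [EuclideanSpace.norm_eq]
  have h1 : ∑ i, ‖v i‖^2 ≤ ∑ _i : Fin d, C^2 := by
    apply Finset.sum_le_sum; intro i _
    simpa [Real.norm_eq_abs, sq_abs] using
      sq_le_sq' (by linarith [(abs_le.1 (h i)).1]) (abs_le.1 (h i)).2
  calc Real.sqrt (∑ i, ‖v i‖^2) ≤ Real.sqrt (d * C^2) := by
        apply Real.sqrt_le_sqrt; simpa using h1
    _ = Real.sqrt d * C := by rw [Real.sqrt_mul (by positivity), Real.sqrt_sq hC]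

lemma abs_coord_le_norm {d : ℕ} (v : EuclideanSpace ℝ (Fin d)) (i : Fin d) : |v i| ≤ ‖v‖ := by
  rw [EuclideanSpace.norm_eq, ← Real.sqrt_sq (abs_nonneg (v i))]
  apply Real.sqrt_le_sqrt
  rw [sq_abs]
  exact (Finset.single_le_sum (f := fun j => ‖v j‖^2) (fun j _ => by positivity)
    (Finset.mem_univ i)).trans_eq' (by simp [Real.norm_eq_abs, sq_abs])

lemma hasFDerivAt_hmap {d : ℕ} (z : ℝ) (x : EuclideanSpace ℝ (Fin d)) :
    HasFDerivAt (hmap z) (Dmap (fun i => z * Real.exp (-(z * x i)))) x := by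
  have h1 : ∀ i : Fin d, HasFDerivAt
      (fun x' : EuclideanSpace ℝ (Fin d) => 1 - Real.exp (-(z * x' i)))
      ((z * Real.exp (-(z * x i))) • (EuclideanSpace.proj (𝕜 := ℝ) i)) x := by
    intro i
    have hd : HasDerivAt (fun t : ℝ => 1 - Real.exp (-(z * t))) (z * Real.exp (-(z * x i))) (x i) := by
      have h0 : HasDerivAt (fun t : ℝ => -(z * t)) (-z) (x i) := by
        simpa using ((hasDerivAt_id (x i)).const_mul z).fun_neg
      have := (h0.exp).const_sub 1
      exact this.congr_deriv (by ring)
    have := hd.comp_hasFDerivAt (𝕜 := ℝ) x ((EuclideanSpace.proj (𝕜 := ℝ) (i := i)).hasFDerivAt (x := x))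
    exact this
  exact ((PiLp.continuousLinearEquiv 2 ℝ (fun _ : Fin d => ℝ)).symm.toContinuousLinearMap.hasFDerivAt).comp
    x (hasFDerivAt_pi.2 h1)

lemma continuous_vec {d : ℕ} {g : ℝ → Fin d → ℝ} (h : Continuous g) :
    Continuous (fun z => vec (g z)) :=
  ((PiLp.continuousLinearEquiv 2 ℝ (fun _ : Fin d => ℝ)).symm.toContinuousLinearMap.continuous).comp h

lemma continuous_hmap {d : ℕ} (x : EuclideanSpace ℝ (Fin d)) :
    Continuous (fun z => hmap z x) :=
  continuous_vec (g := fun z i => 1 - Real.exp (-(z * x i))) (by fun_prop)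

lemma hasDerivAt_hmap_z {d : ℕ} (x : EuclideanSpace ℝ (Fin d)) (z : ℝ) :
    HasDerivAt (fun z => hmap z x) (vec (fun i => Real.exp (-(z * x i)) * x i)) z := by
  have h1 : ∀ i : Fin d, HasDerivAt (fun z => 1 - Real.exp (-(z * x i)))
      (Real.exp (-(z * x i)) * x i) z := by
    intro i
    have h0 : HasDerivAt (fun z : ℝ => -(z * x i)) (-(x i)) z := by
      simpa using ((hasDerivAt_id z).mul_const (x i)).fun_neg
    have := (h0.exp).const_sub 1
    exact this.congr_deriv (by ring)
  have h2 := hasDerivAt_pi.2 h1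
  exact ((PiLp.continuousLinearEquiv 2 ℝ (fun _ : Fin d => ℝ)).symm.toContinuousLinearMap.hasFDerivAt).comp_hasDerivAt z h2


open MeasureTheory in
set_option maxHeartbeats 1000000 in
/-- Cost-term lower bound.
For a non-negative, continuously differentiable, `M₁`-Lipschitz, continuous
DR-submodular `f` with surrogate potential `F`, for every `x ∈ [0,1]^d`:
`(1-e⁻¹)⟨∇F(x), -x⟩ ≥ -f(h(x)) + ∫₀¹ e^{z-1} f(h_z(x)) dz`. -/
theorem stmt6 {d : ℕ} (f : EuclideanSpace ℝ (Fin d) → ℝ) (M₁ : ℝ)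
    (hf : ContDiff ℝ 1 f) (hpos : ∀ x, inBox x → 0 ≤ f x)
    (hLip : ∀ x, inBox x → ‖gradient f x‖ ≤ M₁) (hDR : DRSubmodular f) :
    ∀ x : EuclideanSpace ℝ (Fin d), inBox x →
      -f (hmap 1 x) + (∫ z in (0:ℝ)..1, Real.exp (z - 1) * f (hmap z x)) ≤
        (1 - Real.exp (-1)) * @inner ℝ _ _ (gradient (surrogate f) x) (-x) := by
  intro x hx
  have hden : (0:ℝ) < 1 - Real.exp (-1) := by
    have h := Real.exp_lt_one_iff.mpr (by norm_num : (-1:ℝ) < 0)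
    linarith
  have hinv : (0:ℝ) ≤ (1 - Real.exp (-1))⁻¹ := inv_nonneg.mpr hden.le
  set R : ℝ := Real.sqrt d * (1 + Real.exp 2) with hRdef
  have hR0 : 0 ≤ R := by positivity
  obtain ⟨C₀, hC₀⟩ := (isCompact_closedBall (0 : EuclideanSpace ℝ (Fin d)) R).exists_bound_of_continuousOn
    (Continuous.continuousOn (hf.continuous_fderiv one_ne_zero))
  set C : ℝ := max C₀ 0 with hCdef
  have hC0 : (0:ℝ) ≤ C := le_max_right _ _
  have hC : ∀ y : EuclideanSpace ℝ (Fin d), ‖y‖ ≤ R → ‖fderiv ℝ f y‖ ≤ C := by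
    intro y hy
    refine (hC₀ y ?_).trans (le_max_left _ _)
    simpa [Metric.mem_closedBall, dist_zero_right] using hy
  -- basic coordinate estimates
  have hcoordest : ∀ z ∈ Set.Ioc (0:ℝ) 1, ∀ x' ∈ Metric.ball x 1, ∀ i,
      Real.exp (-(z * x' i)) ≤ Real.exp 2 := by
    intro z hz x' hx' i
    have h2 : ‖x' - x‖ < 1 := by simpa [Metric.mem_ball, dist_eq_norm] using hx'
    have h1 : |x' i - x i| ≤ ‖x' - x‖ := by
      simpa [PiLp.sub_apply] using abs_coord_le_norm (x' - x) i
    have h3 : |x i| ≤ 1 := abs_le.2 ⟨by linarith [(hx i).1], (hx i).2⟩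
    have hxi : |x' i| ≤ 2 := by
      calc |x' i| = |(x' i - x i) + x i| := by ring_nf
        _ ≤ |x' i - x i| + |x i| := abs_add_le _ _
        _ ≤ 2 := by linarith
    apply Real.exp_le_exp.2
    have habs : |z * x' i| ≤ 2 := by
      rw [abs_mul]
      have hz1 : |z| ≤ 1 := abs_le.2 ⟨by linarith [hz.1], hz.2⟩
      calc |z| * |x' i| ≤ 1 * 2 := mul_le_mul hz1 hxi (abs_nonneg _) (by norm_num)
        _ = 2 := by norm_num
    linarith [(abs_le.1 habs).1]
  -- membership of hmap z x' in the ball of radius R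
  have hmem : ∀ z ∈ Set.Ioc (0:ℝ) 1, ∀ x' ∈ Metric.ball x 1, ‖hmap z x'‖ ≤ R := by
    intro z hz x' hx'
    apply norm_le_sqrt_card _ _ (by positivity)
    intro i
    have hexp := hcoordest z hz x' hx' i
    have hp : 0 < Real.exp (-(z * x' i)) := Real.exp_pos _
    have hp2 : 0 < Real.exp (2:ℝ) := Real.exp_pos _
    show |1 - Real.exp (-(z * x' i))| ≤ 1 + Real.exp 2
    rw [abs_le]
    constructor <;> nlinarith
  have hgrad : ∀ z ∈ Set.Ioc (0:ℝ) 1, ∀ x' ∈ Metric.ball x 1,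
      ‖fderiv ℝ f (hmap z x')‖ ≤ C := fun z hz x' hx' => hC _ (hmem z hz x' hx')
  have hcoeff : ∀ z ∈ Set.Ioc (0:ℝ) 1, ∀ x' ∈ Metric.ball x 1, ∀ i,
      |z * Real.exp (-(z * x' i))| ≤ z * Real.exp 2 := by
    intro z hz x' hx' i
    rw [abs_mul, abs_of_pos hz.1, abs_of_pos (Real.exp_pos _)]
    exact mul_le_mul_of_nonneg_left (hcoordest z hz x' hx' i) hz.1.le
  -- notation
  set c : ℝ → ℝ := fun z => Real.exp (z - 1) / ((1 - Real.exp (-1)) * z) with hcdef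
  have hc_nonneg : ∀ z ∈ Set.Ioc (0:ℝ) 1, 0 ≤ c z := by
    intro z hz
    have h := hz.1
    rw [hcdef]
    positivity
  set Fn' : EuclideanSpace ℝ (Fin d) → ℝ → (EuclideanSpace ℝ (Fin d) →L[ℝ] ℝ) := fun x' z =>
    c z • ((fderiv ℝ f (hmap z x')).comp (Dmap (fun i => z * Real.exp (-(z * x' i))))) with hFn'def
  -- pointwise differentiability in x'
  have h_diff : ∀ (z : ℝ) (x' : EuclideanSpace ℝ (Fin d)),
      HasFDerivAt (fun y => c z * (f (hmap z y) - f 0)) (Fn' x' z) x' := by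
    intro z x'
    have h1 := ((hf.differentiable one_ne_zero (hmap z x')).hasFDerivAt).comp x' (hasFDerivAt_hmap z x')
    exact (h1.sub_const (f 0)).const_mul (c z)
  have hcont_c : ContinuousOn c (Set.Ioc (0:ℝ) 1) := by
    rw [hcdef]
    apply ContinuousOn.div (by fun_prop) (by fun_prop)
    intro z hz
    exact ne_of_gt (mul_pos hden hz.1)
  have hcont_A : ∀ x' : EuclideanSpace ℝ (Fin d), Continuous fun z =>
      (fderiv ℝ f (hmap z x')).comp (Dmap (fun i => z * Real.exp (-(z * x' i)))) := by
    intro x'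
    apply Continuous.clm_comp
    · exact (hf.continuous_fderiv one_ne_zero).comp (continuous_hmap x')
    · exact continuous_Dmap.comp (continuous_pi (fun i => by fun_prop))
  -- norm bound on Fn'
  have hFn'_bound : ∀ z ∈ Set.Ioc (0:ℝ) 1, ∀ x' ∈ Metric.ball x 1,
      ‖Fn' x' z‖ ≤ C * Real.exp 2 / (1 - Real.exp (-1)) := by
    intro z hz x' hx'
    have hz0 : (0:ℝ) < z := hz.1
    have hD : ‖Dmap (fun i => z * Real.exp (-(z * x' i)))‖ ≤ z * Real.exp 2 :=
      Dmap_opNorm_le _ _ (by positivity) (hcoeff z hz x' hx')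
    have hA := hgrad z hz x' hx'
    have hexp1 : Real.exp (z - 1) ≤ 1 := Real.exp_le_one_iff.mpr (by linarith [hz.2])
    calc ‖Fn' x' z‖ ≤ c z * ‖(fderiv ℝ f (hmap z x')).comp (Dmap (fun i => z * Real.exp (-(z * x' i))))‖ := by
          refine le_trans (norm_smul_le (c z) ((fderiv ℝ f (hmap z x')).comp (Dmap (fun i => z * Real.exp (-(z * x' i)))))) ?_
          rw [Real.norm_eq_abs, abs_of_nonneg (hc_nonneg z hz)]
      _ ≤ c z * (C * (z * Real.exp 2)) := by
          apply mul_le_mul_of_nonneg_left _ (hc_nonneg z hz)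
          calc ‖(fderiv ℝ f (hmap z x')).comp (Dmap (fun i => z * Real.exp (-(z * x' i))))‖
              ≤ ‖fderiv ℝ f (hmap z x')‖ * ‖Dmap (fun i => z * Real.exp (-(z * x' i)))‖ :=
                ContinuousLinearMap.opNorm_comp_le _ _
            _ ≤ C * (z * Real.exp 2) := mul_le_mul hA hD (norm_nonneg _) hC0
      _ = Real.exp (z - 1) * (C * Real.exp 2) * (1 - Real.exp (-1))⁻¹ := by
          rw [hcdef]
          field_simp
      _ ≤ C * Real.exp 2 * (1 - Real.exp (-1))⁻¹ := by
          apply mul_le_mul_of_nonneg_right _ hinv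
          have hprod : 0 ≤ (1 - Real.exp (z - 1)) * (C * Real.exp 2) :=
            mul_nonneg (by linarith) (mul_nonneg hC0 (Real.exp_pos 2).le)
          nlinarith [hprod]
      _ = C * Real.exp 2 / (1 - Real.exp (-1)) := by rw [div_eq_mul_inv]
  -- key integrability / measurability facts
  have hball : x ∈ Metric.ball x 1 := Metric.mem_ball_self one_pos
  have hmeasIoc : MeasurableSet (Set.Ioc (0:ℝ) 1) := measurableSet_Ioc
  have huIoc : Set.uIoc (0:ℝ) 1 = Set.Ioc (0:ℝ) 1 := Set.uIoc_of_le zero_le_one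
  have hFmeas : ∀ x' : EuclideanSpace ℝ (Fin d),
      AEStronglyMeasurable (fun z => c z * (f (hmap z x') - f 0))
        (MeasureTheory.volume.restrict (Set.uIoc (0:ℝ) 1)) := by
    intro x'
    rw [huIoc]
    apply ContinuousOn.aestronglyMeasurable _ hmeasIoc
    exact hcont_c.mul (((hf.continuous.comp (continuous_hmap x')).sub continuous_const).continuousOn)
  have hF'meas : AEStronglyMeasurable (Fn' x)
      (MeasureTheory.volume.restrict (Set.uIoc (0:ℝ) 1)) := by
    rw [huIoc]
    apply ContinuousOn.aestronglyMeasurable _ hmeasIoc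
    exact hcont_c.smul ((hcont_A x).continuousOn)
  -- bound for the basepoint integrand
  have hFx_bound : ∀ z ∈ Set.Ioc (0:ℝ) 1,
      ‖c z * (f (hmap z x) - f 0)‖ ≤ C * Real.sqrt d / (1 - Real.exp (-1)) := by
    intro z hz
    have hz0 : (0:ℝ) < z := hz.1
    have himg : ‖hmap z x‖ ≤ Real.sqrt d * z := by
      apply norm_le_sqrt_card _ _ hz0.le
      intro i
      have hxi0 : 0 ≤ x i := (hx i).1
      have hxi1 : x i ≤ 1 := (hx i).2
      have ht0 : 0 ≤ z * x i := by positivity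
      have ht1 : z * x i ≤ z := by nlinarith
      have he1 : Real.exp (-(z * x i)) ≤ 1 := Real.exp_le_one_iff.mpr (by linarith)
      have he2 : 1 - (z * x i) ≤ Real.exp (-(z * x i)) := by
        have := Real.add_one_le_exp (-(z * x i))
        linarith
      show |1 - Real.exp (-(z * x i))| ≤ z
      rw [abs_le]
      constructor <;> linarith
    have hdiff : |f (hmap z x) - f 0| ≤ C * ‖hmap z x - 0‖ := by
      have := Convex.norm_image_sub_le_of_norm_fderiv_le
        (f := f) (s := Metric.closedBall (0 : EuclideanSpace ℝ (Fin d)) R)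
        (fun y _ => (hf.differentiable one_ne_zero).differentiableAt)
        (fun y hy => hC y (by simpa [Metric.mem_closedBall, dist_zero_right] using hy))
        (convex_closedBall _ _)
        (Metric.mem_closedBall_self hR0)
        (Metric.mem_closedBall.2 (by simpa [dist_zero_right] using hmem z hz x hball))
      simpa [Real.norm_eq_abs] using this
    have hcz := hc_nonneg z hz
    have hexp1 : Real.exp (z - 1) ≤ 1 := Real.exp_le_one_iff.mpr (by linarith [hz.2])
    calc ‖c z * (f (hmap z x) - f 0)‖ = c z * |f (hmap z x) - f 0| := by
          rw [Real.norm_eq_abs, abs_mul, abs_of_nonneg hcz]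
      _ ≤ c z * (C * (Real.sqrt d * z)) := by
          apply mul_le_mul_of_nonneg_left _ hcz
          refine hdiff.trans ?_
          rw [sub_zero]
          exact mul_le_mul_of_nonneg_left himg hC0
      _ = Real.exp (z - 1) * (C * Real.sqrt d) * (1 - Real.exp (-1))⁻¹ := by
          rw [hcdef]
          field_simp
      _ ≤ C * Real.sqrt d * (1 - Real.exp (-1))⁻¹ := by
          apply mul_le_mul_of_nonneg_right _ hinv
          have hprod : 0 ≤ (1 - Real.exp (z - 1)) * (C * Real.sqrt d) :=
            mul_nonneg (by linarith) (mul_nonneg hC0 (Real.sqrt_nonneg _))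
          nlinarith [hprod]
      _ = C * Real.sqrt d / (1 - Real.exp (-1)) := by rw [div_eq_mul_inv]
  have hFint : IntervalIntegrable (fun z => c z * (f (hmap z x) - f 0))
      MeasureTheory.volume 0 1 := by
    rw [intervalIntegrable_iff_integrableOn_Ioc_of_le zero_le_one]
    apply MeasureTheory.Integrable.mono'
      (MeasureTheory.integrable_const (C * Real.sqrt d / (1 - Real.exp (-1))))
    · have := hFmeas x
      rwa [huIoc] at this
    · rw [MeasureTheory.ae_restrict_iff' hmeasIoc]
      exact MeasureTheory.ae_of_all _ (fun z hz => hFx_bound z hz)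
  have hF'int : IntervalIntegrable (Fn' x) MeasureTheory.volume 0 1 := by
    rw [intervalIntegrable_iff_integrableOn_Ioc_of_le zero_le_one]
    apply MeasureTheory.Integrable.mono'
      (MeasureTheory.integrable_const (C * Real.exp 2 / (1 - Real.exp (-1))))
    · have := hF'meas
      rwa [huIoc] at this
    · rw [MeasureTheory.ae_restrict_iff' hmeasIoc]
      exact MeasureTheory.ae_of_all _ (fun z hz => hFn'_bound z hz x hball)
  -- differentiation under the integral sign
  have hF : HasFDerivAt (surrogate f) (∫ z in (0:ℝ)..1, Fn' x z) x := by
    have := hasFDerivAt_integral_of_dominated_of_fderiv_le'' (μ := MeasureTheory.volume)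
      (F := fun x' z => c z * (f (hmap z x') - f 0)) (F' := Fn')
      (x₀ := x) (a := 0) (b := 1)
      (bound := fun _ => C * Real.exp 2 / (1 - Real.exp (-1)))
      (Metric.ball_mem_nhds x one_pos)
      (Filter.Eventually.of_forall hFmeas)
      hFint
      hF'meas
      ?_
      (intervalIntegrable_const)
      ?_
    · exact this
    · rw [MeasureTheory.ae_restrict_iff' (huIoc ▸ hmeasIoc)]
      refine MeasureTheory.ae_of_all _ (fun z hz x' hx' => ?_)
      exact hFn'_bound z (huIoc ▸ hz) x' hx'
    · refine MeasureTheory.ae_of_all _ (fun z x' _ => h_diff z x')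
  -- gradient of the surrogate
  have hgradat : HasGradientAt (surrogate f)
      ((InnerProductSpace.toDual ℝ (EuclideanSpace ℝ (Fin d))).symm (∫ z in (0:ℝ)..1, Fn' x z)) x := by
    rw [hasGradientAt_iff_hasFDerivAt]
    simpa using hF
  rw [hgradat.gradient, InnerProductSpace.toDual_symm_apply]
  -- apply the derivative to -x
  rw [ContinuousLinearMap.intervalIntegral_apply hF'int (-x)]
  -- the FTC part
  set u : ℝ → EuclideanSpace ℝ (Fin d) := fun z => vec (fun i => Real.exp (-(z * x i)) * x i) with hudef
  have hcont_fh : Continuous fun z => f (hmap z x) := hf.continuous.comp (continuous_hmap x)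
  have hcont_u : Continuous u := continuous_vec (by fun_prop)
  have hcont_Au : Continuous fun z => (fderiv ℝ f (hmap z x)) (u z) :=
    ((hf.continuous_fderiv one_ne_zero).comp (continuous_hmap x)).clm_apply hcont_u
  have hgderiv : ∀ z : ℝ, HasDerivAt (fun z => Real.exp (z - 1) * f (hmap z x))
      (Real.exp (z - 1) * f (hmap z x) + Real.exp (z - 1) * ((fderiv ℝ f (hmap z x)) (u z))) z := by
    intro z
    have h1 : HasDerivAt (fun z : ℝ => Real.exp (z - 1)) (Real.exp (z - 1)) z := by
      simpa using ((hasDerivAt_id z).sub_const 1).exp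
    have h2 : HasDerivAt (fun z => f (hmap z x)) ((fderiv ℝ f (hmap z x)) (u z)) z :=
      ((hf.differentiable one_ne_zero (hmap z x)).hasFDerivAt).comp_hasDerivAt z (hasDerivAt_hmap_z x z)
    exact h1.mul h2
  have hFTC : (∫ z in (0:ℝ)..1, (Real.exp (z - 1) * f (hmap z x)
        + Real.exp (z - 1) * ((fderiv ℝ f (hmap z x)) (u z))))
      = Real.exp (1 - 1) * f (hmap 1 x) - Real.exp (0 - 1) * f (hmap 0 x) := by
    apply intervalIntegral.integral_eq_sub_of_hasDerivAt (fun z _ => hgderiv z)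
    exact ((Continuous.mul (by fun_prop) hcont_fh).add ((by fun_prop : Continuous fun z : ℝ => Real.exp (z-1)).mul hcont_Au)).intervalIntegrable _ _
  have hsplit : (∫ z in (0:ℝ)..1, (Real.exp (z - 1) * f (hmap z x)
        + Real.exp (z - 1) * ((fderiv ℝ f (hmap z x)) (u z))))
      = (∫ z in (0:ℝ)..1, Real.exp (z - 1) * f (hmap z x))
        + ∫ z in (0:ℝ)..1, Real.exp (z - 1) * ((fderiv ℝ f (hmap z x)) (u z)) := by
    apply intervalIntegral.integral_add
    · exact ((by fun_prop : Continuous fun z : ℝ => Real.exp (z-1)).mul hcont_fh).intervalIntegrable _ _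
    · exact ((by fun_prop : Continuous fun z : ℝ => Real.exp (z-1)).mul hcont_Au).intervalIntegrable _ _
  have hmap0 : hmap 0 x = (0 : EuclideanSpace ℝ (Fin d)) := by
    ext i
    show 1 - Real.exp (-(0 * x i)) = 0
    norm_num
  -- pointwise identity on Ioc
  have hptwise : ∀ z ∈ Set.Ioc (0:ℝ) 1,
      (1 - Real.exp (-1)) * ((Fn' x z) (-x))
        = -(Real.exp (z - 1) * ((fderiv ℝ f (hmap z x)) (u z))) := by
    intro z hz
    have hz0 : z ≠ 0 := ne_of_gt hz.1
    have harg : Dmap (fun i => z * Real.exp (-(z * x i))) (-x) = (-z) • u z := by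
      ext i
      show (fun i => z * Real.exp (-(z * x i))) i * (-x) i = _
      have h1 : ((-z) • u z) i = (-z) * (Real.exp (-(z * x i)) * x i) := rfl
      rw [h1]
      have h2 : (-x) i = -(x i) := rfl
      rw [h2]
      ring
    have happ0 : (Fn' x z) (-x)
        = c z * ((fderiv ℝ f (hmap z x)) (Dmap (fun i => z * Real.exp (-(z * x i))) (-x))) := rfl
    rw [happ0, harg, ContinuousLinearMap.map_smul]
    simp only [smul_eq_mul]
    rw [hcdef]
    field_simp
  -- put everything together
  have hconst : (1 - Real.exp (-1)) * (∫ z in (0:ℝ)..1, (Fn' x z) (-x))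
      = ∫ z in (0:ℝ)..1, (1 - Real.exp (-1)) * ((Fn' x z) (-x)) :=
    (intervalIntegral.integral_const_mul _ _).symm
  have heval : ∀ z : ℝ, (Fn' x z) (-x) = c z * (((fderiv ℝ f (hmap z x)).comp
      (Dmap (fun i => z * Real.exp (-(z * x i))))) (-x)) := fun z => rfl
  have happIntC : ContinuousOn (fun z => (Fn' x z) (-x)) (Set.Ioc (0:ℝ) 1) := by
    simp only [heval]
    exact hcont_c.mul ((hcont_A x).clm_apply continuous_const).continuousOn
  have happInt : IntervalIntegrable (fun z => (Fn' x z) (-x)) MeasureTheory.volume 0 1 := by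
    rw [intervalIntegrable_iff_integrableOn_Ioc_of_le zero_le_one]
    apply MeasureTheory.Integrable.mono'
      (MeasureTheory.integrable_const (C * Real.exp 2 / (1 - Real.exp (-1)) * ‖x‖))
    · exact happIntC.aestronglyMeasurable hmeasIoc
    · rw [MeasureTheory.ae_restrict_iff' hmeasIoc]
      refine MeasureTheory.ae_of_all _ (fun z hz => ?_)
      calc ‖(Fn' x z) (-x)‖ ≤ ‖Fn' x z‖ * ‖-x‖ := ContinuousLinearMap.le_opNorm _ _
        _ = ‖Fn' x z‖ * ‖x‖ := by rw [norm_neg]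
        _ ≤ C * Real.exp 2 / (1 - Real.exp (-1)) * ‖x‖ :=
            mul_le_mul_of_nonneg_right (hFn'_bound z hz x hball) (norm_nonneg _)
  have hcongr : (∫ z in (0:ℝ)..1, (1 - Real.exp (-1)) * ((Fn' x z) (-x)))
      = ∫ z in (0:ℝ)..1, -(Real.exp (z - 1) * ((fderiv ℝ f (hmap z x)) (u z))) := by
    rw [intervalIntegral.integral_of_le zero_le_one, intervalIntegral.integral_of_le zero_le_one]
    apply MeasureTheory.setIntegral_congr_fun hmeasIoc
    intro z hz
    exact hptwise z hz
  have hneg : (∫ z in (0:ℝ)..1, -(Real.exp (z - 1) * ((fderiv ℝ f (hmap z x)) (u z))))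
      = -∫ z in (0:ℝ)..1, Real.exp (z - 1) * ((fderiv ℝ f (hmap z x)) (u z)) :=
    intervalIntegral.integral_neg
  have hf0 : 0 ≤ f 0 := by
    apply hpos 0
    intro i
    constructor <;> simp
  have hval : (∫ z in (0:ℝ)..1, Real.exp (z - 1) * ((fderiv ℝ f (hmap z x)) (u z)))
      = f (hmap 1 x) - Real.exp (-1) * f 0 - ∫ z in (0:ℝ)..1, Real.exp (z - 1) * f (hmap z x) := by
    have := hFTC
    rw [hsplit] at this
    rw [hmap0] at this
    norm_num at this
    linarith [this]
  rw [hconst, hcongr, hneg, hval]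
  have hexp0 : 0 < Real.exp (-1) := Real.exp_pos _
  nlinarith [hexp0, hf0]
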